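/- For every s > 0, one has s·log s = ∫₀^∞ (e^{−sx} − 1 + s·x·1_{[0,1]}(x))·x^{−2} dx − s·∫₀^∞ (e^{−x} − 1 + x·1_{[0,1]}(x))·x^{−2} dx, where both integrals converge absolutely. -/

import Mathlib

open MeasureTheory Set Filter Real

lemma exp_neg_sub_bound {y : ℝ} (hy : 0 ≤ y) :
    |Real.exp (-y) - 1 + y| ≤ y ^ 2 := by
  have h1 : 1 - y ≤ Real.exp (-y) := by
    have := Real.add_one_le_exp (-y); linarith
  have hpos : (0:ℝ) < 1 + y := by linarith
  have h2 : Real.exp (-y) ≤ (1 + y)⁻¹ := by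
    rw [Real.exp_neg]
    have h3 : 1 + y ≤ Real.exp y := by have := Real.add_one_le_exp y; linarith
    exact inv_anti₀ hpos h3
  have hmul : (1 + y) * (1 + y)⁻¹ = 1 := mul_inv_cancel₀ (ne_of_gt hpos)
  have hinv : 0 ≤ (1 + y)⁻¹ := inv_nonneg.2 hpos.le
  rw [abs_le]
  constructor
  · nlinarith [sq_nonneg y]
  · nlinarith [pow_nonneg hy 3, sq_nonneg y]

lemma frullani_integrable (a t : ℝ) (ha : 0 < a) (ht : 0 < t) :
    IntegrableOn
      (fun x : ℝ => (Real.exp (-a * x) - 1 +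
        a * x * Set.indicator (Set.Icc (0:ℝ) t) (fun _ => (1:ℝ)) x) / x ^ 2)
      (Set.Ioi 0) := by
  have hmeas : AEStronglyMeasurable
      (fun x : ℝ => (Real.exp (-a * x) - 1 +
        a * x * Set.indicator (Set.Icc (0:ℝ) t) (fun _ => (1:ℝ)) x) / x ^ 2) volume := by
    apply Measurable.aestronglyMeasurable
    apply Measurable.div
    · exact ((Real.measurable_exp.comp (measurable_const.mul measurable_id)).sub
        measurable_const).add
        ((measurable_const.mul measurable_id).mul
          (measurable_const.indicator measurableSet_Icc))
    · exact (measurable_id.pow_const 2)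
  rw [show Set.Ioi (0:ℝ) = Set.Ioc 0 t ∪ Set.Ioi t from (Set.Ioc_union_Ioi_eq_Ioi ht.le).symm]
  apply MeasureTheory.IntegrableOn.union
  · -- on Ioc 0 t : bounded by a^2
    apply Integrable.mono' (g := fun _ : ℝ => a ^ 2)
    · exact integrableOn_const measure_Ioc_lt_top.ne
    · exact hmeas.restrict
    · filter_upwards [ae_restrict_mem measurableSet_Ioc] with x hx
      have hx0 : 0 < x := hx.1
      have hxt : x ≤ t := hx.2
      rw [Set.indicator_of_mem (Set.mem_Icc.mpr ⟨hx0.le, hxt⟩)]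
      have hb := exp_neg_sub_bound (mul_nonneg ha.le hx0.le)
      have hsq : (0:ℝ) < x ^ 2 := pow_pos hx0 2
      rw [Real.norm_eq_abs, abs_div, abs_of_pos hsq, div_le_iff₀ hsq]
      have : -a * x = -(a * x) := by ring
      rw [this, mul_one]
      calc |Real.exp (-(a * x)) - 1 + a * x| ≤ (a * x) ^ 2 := hb
        _ = a ^ 2 * x ^ 2 := by ring
  · -- on Ioi t : bounded by 2 * x ^ (-2)
    apply Integrable.mono' (g := fun x : ℝ => 2 * x ^ (-2 : ℝ))
    · exact (integrableOn_Ioi_rpow_of_lt (by norm_num) ht).const_mul 2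
    · exact hmeas.restrict
    · filter_upwards [ae_restrict_mem measurableSet_Ioi] with x hx
      have hx0 : 0 < x := ht.trans hx
      rw [Set.indicator_of_notMem (fun h => absurd h.2 (not_le.2 hx))]
      have hsq : (0:ℝ) < x ^ 2 := pow_pos hx0 2
      have hx2 : x ^ (-2 : ℝ) = (x ^ 2)⁻¹ := by
        rw [Real.rpow_neg hx0.le]
        norm_num [Real.rpow_natCast]
      have he1 : Real.exp (-a * x) ≤ 1 := by
        rw [Real.exp_le_one_iff]
        nlinarith
      have he0 : 0 < Real.exp (-a * x) := Real.exp_pos _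
      rw [hx2, mul_zero, add_zero, Real.norm_eq_abs, abs_div, abs_of_pos hsq, div_le_iff₀ hsq]
      have hcanc : 2 * (x ^ 2)⁻¹ * x ^ 2 = 2 := by field_simp
      rw [hcanc]
      rw [abs_le]
      constructor <;> nlinarith

theorem s_log_s_integral (s : ℝ) (hs : 0 < s) :
    IntegrableOn
      (fun x : ℝ => (Real.exp (-s * x) - 1 +
        s * x * Set.indicator (Set.Icc (0:ℝ) 1) (fun _ => (1:ℝ)) x) / x ^ 2)
      (Set.Ioi 0) ∧
    IntegrableOn
      (fun x : ℝ => (Real.exp (-x) - 1 +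
        x * Set.indicator (Set.Icc (0:ℝ) 1) (fun _ => (1:ℝ)) x) / x ^ 2)
      (Set.Ioi 0) ∧
    s * Real.log s =
      (∫ x in Set.Ioi (0:ℝ), (Real.exp (-s * x) - 1 +
        s * x * Set.indicator (Set.Icc (0:ℝ) 1) (fun _ => (1:ℝ)) x) / x ^ 2)
      - s * ∫ x in Set.Ioi (0:ℝ), (Real.exp (-x) - 1 +
        x * Set.indicator (Set.Icc (0:ℝ) 1) (fun _ => (1:ℝ)) x) / x ^ 2 := by
  have hG : IntegrableOn
      (fun x : ℝ => (Real.exp (-x) - 1 +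
        x * Set.indicator (Set.Icc (0:ℝ) 1) (fun _ => (1:ℝ)) x) / x ^ 2) (Set.Ioi 0) := by
    have := frullani_integrable 1 1 one_pos one_pos
    simpa using this
  refine ⟨frullani_integrable s 1 hs one_pos, hG, ?_⟩
  -- Gs : the scaled-indicator version
  set Gs : ℝ → ℝ := fun x => (Real.exp (-x) - 1 +
      x * Set.indicator (Set.Icc (0:ℝ) s) (fun _ => (1:ℝ)) x) / x ^ 2 with hGs_def
  have hGs : IntegrableOn Gs (Set.Ioi 0) := by
    have := frullani_integrable 1 s one_pos hs
    simpa [hGs_def] using this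
  set G : ℝ → ℝ := fun x => (Real.exp (-x) - 1 +
      x * Set.indicator (Set.Icc (0:ℝ) 1) (fun _ => (1:ℝ)) x) / x ^ 2 with hG_def
  -- Step A: change of variables
  have stepA : (∫ x in Set.Ioi (0:ℝ), (Real.exp (-s * x) - 1 +
      s * x * Set.indicator (Set.Icc (0:ℝ) 1) (fun _ => (1:ℝ)) x) / x ^ 2)
      = s * ∫ x in Set.Ioi (0:ℝ), Gs x := by
    have key : Set.EqOn
        (fun x : ℝ => (Real.exp (-s * x) - 1 +
          s * x * Set.indicator (Set.Icc (0:ℝ) 1) (fun _ => (1:ℝ)) x) / x ^ 2)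
        (fun x : ℝ => s ^ 2 * Gs (s * x)) (Set.Ioi 0) := by
      intro x hx
      have hx0 : 0 < x := hx
      have hsx : 0 < s * x := mul_pos hs hx0
      have hind : Set.indicator (Set.Icc (0:ℝ) s) (fun _ => (1:ℝ)) (s * x)
          = Set.indicator (Set.Icc (0:ℝ) 1) (fun _ => (1:ℝ)) x := by
        by_cases h1 : x ≤ 1
        · rw [Set.indicator_of_mem (Set.mem_Icc.mpr ⟨hsx.le, by nlinarith⟩),
            Set.indicator_of_mem (Set.mem_Icc.mpr ⟨hx0.le, h1⟩)]
        · rw [Set.indicator_of_notMem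
              (fun h => h1 (by nlinarith [(Set.mem_Icc.mp h).2])),
            Set.indicator_of_notMem (fun h => h1 (Set.mem_Icc.mp h).2)]
      simp only [hGs_def]
      rw [hind]
      have hne : x ≠ 0 := hx0.ne'
      have hsne : s ≠ 0 := hs.ne'
      have hneg : -(s * x) = -s * x := by ring
      rw [hneg]
      field_simp
    rw [MeasureTheory.setIntegral_congr_fun measurableSet_Ioi key,
      MeasureTheory.integral_const_mul,
      MeasureTheory.integral_comp_mul_left_Ioi Gs 0 hs]
    rw [mul_zero, smul_eq_mul]
    field_simp
  -- Step B: the difference of the two base integrals is log s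
  have stepB : (∫ x in Set.Ioi (0:ℝ), Gs x) - (∫ x in Set.Ioi (0:ℝ), G x) = Real.log s := by
    rw [← MeasureTheory.integral_sub hGs hG]
    rcases le_total 1 s with h1s | hs1
    · have key2 : Set.EqOn (fun x => Gs x - G x)
          (Set.indicator (Set.Ioc (1:ℝ) s) (fun y => y⁻¹)) (Set.Ioi 0) := by
        intro x hx
        have hx0 : 0 < x := hx
        simp only [hGs_def, hG_def]
        by_cases hx1 : x ≤ 1
        · have eA : (Set.Icc (0:ℝ) s).indicator (fun _ => (1:ℝ)) x = 1 :=
            Set.indicator_of_mem (Set.mem_Icc.mpr ⟨hx0.le, hx1.trans h1s⟩) _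
          have eB : (Set.Icc (0:ℝ) 1).indicator (fun _ => (1:ℝ)) x = 1 :=
            Set.indicator_of_mem (Set.mem_Icc.mpr ⟨hx0.le, hx1⟩) _
          have eC : (Set.Ioc (1:ℝ) s).indicator (fun y : ℝ => y⁻¹) x = 0 :=
            Set.indicator_of_notMem (fun h => absurd (Set.mem_Ioc.mp h).1 (not_lt.2 hx1)) _
          rw [eA, eB, eC]
          ring
        · push_neg at hx1
          by_cases hxs : x ≤ s
          · have eA : (Set.Icc (0:ℝ) s).indicator (fun _ => (1:ℝ)) x = 1 :=
              Set.indicator_of_mem (Set.mem_Icc.mpr ⟨hx0.le, hxs⟩) _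
            have eB : (Set.Icc (0:ℝ) 1).indicator (fun _ => (1:ℝ)) x = 0 :=
              Set.indicator_of_notMem (fun h => absurd (Set.mem_Icc.mp h).2 (not_le.2 hx1)) _
            have eC : (Set.Ioc (1:ℝ) s).indicator (fun y : ℝ => y⁻¹) x = x⁻¹ :=
              Set.indicator_of_mem (Set.mem_Ioc.mpr ⟨hx1, hxs⟩) _
            rw [eA, eB, eC]
            have hne : x ≠ 0 := hx0.ne'
            field_simp
            ring
          · push_neg at hxs
            have eA : (Set.Icc (0:ℝ) s).indicator (fun _ => (1:ℝ)) x = 0 :=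
              Set.indicator_of_notMem (fun h => absurd (Set.mem_Icc.mp h).2 (not_le.2 hxs)) _
            have eB : (Set.Icc (0:ℝ) 1).indicator (fun _ => (1:ℝ)) x = 0 :=
              Set.indicator_of_notMem
                (fun h => absurd (Set.mem_Icc.mp h).2 (not_le.2 (h1s.trans_lt hxs))) _
            have eC : (Set.Ioc (1:ℝ) s).indicator (fun y : ℝ => y⁻¹) x = 0 :=
              Set.indicator_of_notMem (fun h => absurd (Set.mem_Ioc.mp h).2 (not_le.2 hxs)) _
            rw [eA, eB, eC]
            ring
      rw [MeasureTheory.setIntegral_congr_fun measurableSet_Ioi key2,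
        MeasureTheory.setIntegral_indicator measurableSet_Ioc]
      have hinter : Set.Ioi (0:ℝ) ∩ Set.Ioc 1 s = Set.Ioc 1 s := by
        apply Set.inter_eq_self_of_subset_right
        intro y hy
        exact lt_trans one_pos hy.1
      rw [hinter, ← intervalIntegral.integral_of_le h1s,
        integral_inv_of_pos one_pos hs, div_one]
    · have key2 : Set.EqOn (fun x => Gs x - G x)
          (fun x => -(Set.indicator (Set.Ioc s (1:ℝ)) (fun y => y⁻¹) x)) (Set.Ioi 0) := by
        intro x hx
        have hx0 : 0 < x := hx
        simp only [hGs_def, hG_def]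
        by_cases hxs : x ≤ s
        · have eA : (Set.Icc (0:ℝ) s).indicator (fun _ => (1:ℝ)) x = 1 :=
            Set.indicator_of_mem (Set.mem_Icc.mpr ⟨hx0.le, hxs⟩) _
          have eB : (Set.Icc (0:ℝ) 1).indicator (fun _ => (1:ℝ)) x = 1 :=
            Set.indicator_of_mem (Set.mem_Icc.mpr ⟨hx0.le, hxs.trans hs1⟩) _
          have eC : (Set.Ioc s (1:ℝ)).indicator (fun y : ℝ => y⁻¹) x = 0 :=
            Set.indicator_of_notMem (fun h => absurd (Set.mem_Ioc.mp h).1 (not_lt.2 hxs)) _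
          rw [eA, eB, eC]
          ring
        · push_neg at hxs
          by_cases hx1 : x ≤ 1
          · have eA : (Set.Icc (0:ℝ) s).indicator (fun _ => (1:ℝ)) x = 0 :=
              Set.indicator_of_notMem (fun h => absurd (Set.mem_Icc.mp h).2 (not_le.2 hxs)) _
            have eB : (Set.Icc (0:ℝ) 1).indicator (fun _ => (1:ℝ)) x = 1 :=
              Set.indicator_of_mem (Set.mem_Icc.mpr ⟨hx0.le, hx1⟩) _
            have eC : (Set.Ioc s (1:ℝ)).indicator (fun y : ℝ => y⁻¹) x = x⁻¹ :=
              Set.indicator_of_mem (Set.mem_Ioc.mpr ⟨hxs, hx1⟩) _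
            rw [eA, eB, eC]
            have hne : x ≠ 0 := hx0.ne'
            field_simp
            ring
          · push_neg at hx1
            have eA : (Set.Icc (0:ℝ) s).indicator (fun _ => (1:ℝ)) x = 0 :=
              Set.indicator_of_notMem
                (fun h => absurd (Set.mem_Icc.mp h).2 (not_le.2 (hs1.trans_lt hx1))) _
            have eB : (Set.Icc (0:ℝ) 1).indicator (fun _ => (1:ℝ)) x = 0 :=
              Set.indicator_of_notMem (fun h => absurd (Set.mem_Icc.mp h).2 (not_le.2 hx1)) _
            have eC : (Set.Ioc s (1:ℝ)).indicator (fun y : ℝ => y⁻¹) x = 0 :=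
              Set.indicator_of_notMem (fun h => absurd (Set.mem_Ioc.mp h).2 (not_le.2 hx1)) _
            rw [eA, eB, eC]
            ring
      rw [MeasureTheory.setIntegral_congr_fun measurableSet_Ioi key2,
        MeasureTheory.integral_neg,
        MeasureTheory.setIntegral_indicator measurableSet_Ioc]
      have hinter : Set.Ioi (0:ℝ) ∩ Set.Ioc s 1 = Set.Ioc s 1 := by
        apply Set.inter_eq_self_of_subset_right
        intro y hy
        exact lt_trans hs hy.1
      rw [hinter, ← intervalIntegral.integral_of_le hs1,
        integral_inv_of_pos hs one_pos]
      rw [← Real.log_inv]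
      congr 1
      field_simp
  rw [stepA, ← stepB]
  ring
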